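/- Let H be a hypergraph and G its incidence graph. Then the r-dynamic choosability of G is at least the r-strong choosability of H: ch_r(G) ≥ ch^r(H). -/

import Mathlib

/-- `f` is an `r`-dynamic (proper) coloring of `G`. -/
def IsDynColoring {V : Type*} [Fintype V] [DecidableEq V] (G : SimpleGraph V)
    [DecidableRel G.Adj] (r : ℕ) (f : V → ℕ) : Prop :=
  (∀ u v : V, G.Adj u v → f u ≠ f v) ∧
  ∀ v : V, min r (G.degree v) ≤ ((G.neighborFinset v).image f).card

/-- The `r`-dynamic choosability of `G`. -/
noncomputable def chDyn {V : Type*} [Fintype V] [DecidableEq V] (G : SimpleGraph V)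
    [DecidableRel G.Adj] (r : ℕ) : ℕ :=
  sInf {k | ∀ L : V → Finset ℕ, (∀ v, k ≤ (L v).card) →
    ∃ f : V → ℕ, (∀ v, f v ∈ L v) ∧ IsDynColoring G r f}

/-- `f` is an `r`-strong coloring of the hypergraph with edge set `E`. -/
def IsStrongColoring {V : Type*} [DecidableEq V] (E : Finset (Finset V)) (r : ℕ)
    (f : V → ℕ) : Prop :=
  ∀ e ∈ E, min r e.card ≤ (e.image f).card

/-- The `r`-strong choosability of the hypergraph with edge set `E`. -/
noncomputable def chStrong {V : Type*} [DecidableEq V] (E : Finset (Finset V)) (r : ℕ) : ℕ :=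
  sInf {k | ∀ L : V → Finset ℕ, (∀ v, k ≤ (L v).card) →
    ∃ f : V → ℕ, (∀ v, f v ∈ L v) ∧ IsStrongColoring E r f}

/-- The incidence graph of the hypergraph with edge set `E`. -/
def incidenceGraph {V : Type*} [DecidableEq V] (E : Finset (Finset V)) :
    SimpleGraph (V ⊕ {e // e ∈ E}) where
  Adj a b :=
    (∃ v e, a = Sum.inl v ∧ b = Sum.inr e ∧ v ∈ e.1) ∨
    (∃ v e, b = Sum.inl v ∧ a = Sum.inr e ∧ v ∈ e.1)
  symm := by
    constructor
    rintro a b (⟨v, e, h1, h2, h3⟩ | ⟨v, e, h1, h2, h3⟩)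
    · exact Or.inr ⟨v, e, h1, h2, h3⟩
    · exact Or.inl ⟨v, e, h1, h2, h3⟩
  loopless := by constructor; rintro a (⟨v, e, h1, h2, _⟩ | ⟨v, e, h1, h2, _⟩) <;> simp_all

noncomputable instance {V : Type*} [DecidableEq V] (E : Finset (Finset V)) :
    DecidableRel (incidenceGraph E).Adj := fun _ _ => Classical.dec _

theorem chDyn_incidence_ge_chStrong {V : Type*} [Fintype V] [DecidableEq V]
    (E : Finset (Finset V)) (r : ℕ) :
    chStrong E r ≤ chDyn (incidenceGraph E) r := by
  classical
  set W := V ⊕ {e // e ∈ E} with hW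
  -- the dyn set is nonempty, so chDyn is a member
  have hval : (chDyn (incidenceGraph E) r) ∈ {k | ∀ L : W → Finset ℕ,
      (∀ v, k ≤ (L v).card) →
      ∃ f : W → ℕ, (∀ v, f v ∈ L v) ∧ IsDynColoring (incidenceGraph E) r f} := by
    apply Nat.sInf_mem
    refine ⟨Fintype.card W, ?_⟩
    intro L hL
    have hall : ∀ s : Finset W, s.card ≤ (s.biUnion L).card := by
      intro s
      rcases s.eq_empty_or_nonempty with rfl | ⟨v, hv⟩
      · simp
      · calc s.card ≤ Fintype.card W := s.card_le_univ.trans (by simp)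
          _ ≤ (L v).card := hL v
          _ ≤ (s.biUnion L).card :=
            Finset.card_le_card (fun x hx => Finset.mem_biUnion.mpr ⟨v, hv, hx⟩)
    obtain ⟨f, hfinj, hfL⟩ := (Finset.all_card_le_biUnion_card_iff_exists_injective L).mp hall
    refine ⟨f, hfL, fun u v huv hf => (incidenceGraph E).ne_of_adj huv (hfinj hf), ?_⟩
    intro v
    rw [Finset.card_image_of_injective _ hfinj]
    exact min_le_right _ _
  apply Nat.sInf_le
  intro L hL
  set k := chDyn (incidenceGraph E) r with hk
  set L' : W → Finset ℕ := Sum.elim L (fun _ => Finset.range k) with hL'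
  obtain ⟨f, hfL, _, hdyn⟩ := hval L' (by
    rintro (v | e)
    · simpa [L'] using hL v
    · simp [L'])
  refine ⟨fun v => f (Sum.inl v), fun v => hfL (Sum.inl v), ?_⟩
  intro e he
  have hnb : (incidenceGraph E).neighborFinset (Sum.inr ⟨e, he⟩) = e.image Sum.inl := by
    ext w
    cases w with
    | inl v =>
        rw [SimpleGraph.mem_neighborFinset]
        simp [incidenceGraph, he]
    | inr e' =>
        rw [SimpleGraph.mem_neighborFinset]
        simp [incidenceGraph]
  have hdeg : (incidenceGraph E).degree (Sum.inr ⟨e, he⟩) = e.card := by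
    rw [← SimpleGraph.card_neighborFinset_eq_degree, hnb,
      Finset.card_image_of_injective _ Sum.inl_injective]
  have h := hdyn (Sum.inr ⟨e, he⟩)
  rw [hdeg, hnb, Finset.image_image] at h
  exact h
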